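/- Let (Ω, 𝒫) be a probability space and let Z₁, …, Zₙ : Ω → ℝ be independent random variables, each distributed as a standard Gaussian (mean 0, variance 1). Let μ ∈ ℝⁿ, let L be an n×n real matrix, and define the random vector Δρ(ω) = μ + L·Z(ω). Let b ∈ ℝⁿ with Lᵀb ≠ 0, let a, c ∈ ℝ, let ε ∈ (0,1), and let q ∈ ℝ satisfy Φ(q) = 1 − ε, where Φ is the standard Gaussian cumulative distribution function. Then the chance constraint 𝒫[a + bᵀΔρ ≤ c] ≥ 1 − ε holds if and only if a + bᵀμ + q·‖Lᵀb‖₂ ≤ c, where ‖Lᵀb‖₂ = √(Σⱼ (Σᵢ bᵢ·Lᵢⱼ)²). -/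

import Mathlib

open ProbabilityTheory MeasureTheory Real
open scoped NNReal ENNReal

lemma gauss_conv_pdf {v1 v2 : ℝ≥0} (h1 : v1 ≠ 0) (h2 : v2 ≠ 0) (y : ℝ) :
    ∫ x, gaussianPDFReal 0 v1 x * gaussianPDFReal 0 v2 (y - x)
      = gaussianPDFReal 0 (v1 + v2) y := by
  have hs1 : (0:ℝ) < v1 := lt_of_le_of_ne v1.coe_nonneg (by exact_mod_cast (Ne.symm h1))
  have hs2 : (0:ℝ) < v2 := lt_of_le_of_ne v2.coe_nonneg (by exact_mod_cast (Ne.symm h2))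
  set s1 : ℝ := (v1 : ℝ)
  set s2 : ℝ := (v2 : ℝ)
  have hs : (0:ℝ) < s1 + s2 := by linarith
  set A : ℝ := (s1 + s2) / (2 * s1 * s2) with hA
  have hApos : 0 < A := by positivity
  set m : ℝ := s1 * y / (s1 + s2) with hm
  set K : ℝ := y ^ 2 / (2 * (s1 + s2)) with hK
  have hexp : ∀ x : ℝ, rexp (-(x - 0)^2 / (2 * s1)) * rexp (-(y - x - 0)^2 / (2 * s2))
      = rexp (-K) * rexp (-(A * (x - m) ^ 2)) := by
    intro x
    rw [← Real.exp_add, ← Real.exp_add]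
    congr 1
    rw [hA, hm, hK]
    field_simp
    ring
  simp only [gaussianPDFReal]
  push_cast
  calc ∫ x, (√(2 * π * s1))⁻¹ * rexp (-(x - 0)^2 / (2 * s1)) *
        ((√(2 * π * s2))⁻¹ * rexp (-(y - x - 0)^2 / (2 * s2)))
      = (√(2 * π * s1))⁻¹ * (√(2 * π * s2))⁻¹ * rexp (-K) *
          ∫ x, rexp (-(A * (x - m) ^ 2)) := by
        rw [← integral_const_mul]
        congr 1
        ext x
        rw [show (√(2 * π * s1))⁻¹ * rexp (-(x - 0)^2 / (2 * s1)) *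
              ((√(2 * π * s2))⁻¹ * rexp (-(y - x - 0)^2 / (2 * s2)))
            = (√(2 * π * s1))⁻¹ * (√(2 * π * s2))⁻¹ *
              (rexp (-(x - 0)^2 / (2 * s1)) * rexp (-(y - x - 0)^2 / (2 * s2))) by ring,
          hexp x]
        ring
    _ = (√(2 * π * s1))⁻¹ * (√(2 * π * s2))⁻¹ * rexp (-K) * √(π / A) := by
        rw [show (∫ x, rexp (-(A * (x - m) ^ 2))) = ∫ x, rexp (-A * x ^ 2) by
            rw [← integral_sub_right_eq_self (fun x => rexp (-A * x ^ 2)) m]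
            congr 1; ext x; ring_nf,
          integral_gaussian]
    _ = (√(2 * π * (s1 + s2)))⁻¹ * rexp (-(y - 0)^2 / (2 * (s1 + s2))) := by
        rw [show -(y - 0)^2 / (2 * (s1 + s2)) = -K by rw [hK]; ring]
        have hc : (√(2 * π * s1))⁻¹ * (√(2 * π * s2))⁻¹ * √(π / A)
            = (√(2 * π * (s1 + s2)))⁻¹ := by
          rw [← Real.sqrt_inv, ← Real.sqrt_inv, ← Real.sqrt_inv,
            ← Real.sqrt_mul (by positivity), ← Real.sqrt_mul (by positivity)]
          congr 1
          rw [hA]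
          field_simp
        rw [← hc]
        ring

lemma lintegral_Iic_shift (f : ℝ → ℝ≥0∞) (hf : Measurable f) (t x : ℝ) :
    ∫⁻ y in Set.Iic (t - x), f y = ∫⁻ y in Set.Iic t, f (y - x) := by
  conv_lhs => rw [← MeasureTheory.map_add_right_eq_self volume (-x)]
  rw [setLIntegral_map measurableSet_Iic hf (measurable_add_const (-x))]
  have hset : (fun y : ℝ => y + -x) ⁻¹' Set.Iic (t - x) = Set.Iic t := by
    ext y; simp [sub_eq_add_neg]
  rw [hset]
  simp [sub_eq_add_neg]

lemma gaussianPDFReal_le (v : ℝ≥0) (x : ℝ) :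
    gaussianPDFReal 0 v x ≤ (Real.sqrt (2 * Real.pi * v))⁻¹ := by
  rw [gaussianPDFReal]
  have h1 : Real.exp (-(x - 0) ^ 2 / (2 * v)) ≤ 1 := by
    rw [Real.exp_le_one_iff]
    apply div_nonpos_of_nonpos_of_nonneg
    · simp [sq_nonneg]
    · positivity
  nlinarith [Real.sqrt_nonneg (2 * Real.pi * v), inv_nonneg.mpr (Real.sqrt_nonneg (2 * Real.pi * v)),
    Real.exp_pos (-(x - 0) ^ 2 / (2 * v))]

lemma integrable_prod_pdf (v1 v2 : ℝ≥0) (y : ℝ) :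
    Integrable (fun x => gaussianPDFReal 0 v1 x * gaussianPDFReal 0 v2 (y - x)) := by
  have h := Integrable.bdd_mul (f := fun x => gaussianPDFReal 0 v2 (y - x))
    (integrable_gaussianPDFReal 0 v1)
    (((measurable_gaussianPDFReal 0 v2).comp (measurable_const.sub measurable_id)).aestronglyMeasurable)
    (c := (Real.sqrt (2 * Real.pi * v2))⁻¹) (ae_of_all _ fun x => by
      rw [Real.norm_eq_abs, abs_of_nonneg (gaussianPDFReal_nonneg _ _ _)]
      exact gaussianPDFReal_le v2 (y - x))
  exact h.congr (ae_of_all _ (fun x => mul_comm _ _))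

lemma lintegral_prod_pdf {v1 v2 : ℝ≥0} (h1 : v1 ≠ 0) (h2 : v2 ≠ 0) (y : ℝ) :
    ∫⁻ x, gaussianPDF 0 v1 x * gaussianPDF 0 v2 (y - x) = gaussianPDF 0 (v1 + v2) y := by
  simp_rw [gaussianPDF,
    ← ENNReal.ofReal_mul (gaussianPDFReal_nonneg 0 v1 _)]
  rw [← ofReal_integral_eq_lintegral_ofReal (integrable_prod_pdf v1 v2 y)
    (ae_of_all _ (fun x => mul_nonneg (gaussianPDFReal_nonneg _ _ _) (gaussianPDFReal_nonneg _ _ _))),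
    gauss_conv_pdf h1 h2 y]

lemma gauss_conv (v1 v2 : ℝ≥0) :
    Measure.conv (gaussianReal 0 v1) (gaussianReal 0 v2) = gaussianReal 0 (v1 + v2) := by
  rcases eq_or_ne v1 0 with rfl | h1
  · rw [gaussianReal_zero_var, zero_add]
    unfold Measure.conv
    rw [MeasureTheory.Measure.dirac_prod, Measure.map_map (by fun_prop) (by fun_prop)]
    simp [Function.comp_def]
  rcases eq_or_ne v2 0 with rfl | h2
  · rw [gaussianReal_zero_var, add_zero]
    unfold Measure.conv
    rw [MeasureTheory.Measure.prod_dirac, Measure.map_map (by fun_prop) (by fun_prop)]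
    simp [Function.comp_def]
  have h12 : v1 + v2 ≠ 0 := by simp [h1]
  refine Measure.ext_of_Iic _ _ (fun t => ?_)
  rw [Measure.conv, Measure.map_apply measurable_add measurableSet_Iic]
  have hset : (fun p : ℝ × ℝ => p.1 + p.2) ⁻¹' Set.Iic t ∈
      {s : Set (ℝ × ℝ) | MeasurableSet s} := measurable_add measurableSet_Iic
  rw [Measure.prod_apply (measurable_add measurableSet_Iic)]
  have hslice : ∀ x : ℝ, (Prod.mk x ⁻¹' ((fun p : ℝ × ℝ => p.1 + p.2) ⁻¹' Set.Iic t))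
      = Set.Iic (t - x) := by
    intro x; ext y; simp only [Set.mem_preimage, Set.mem_Iic]; exact le_sub_iff_add_le'.symm
  simp_rw [hslice]
  -- inner measure as lintegral over Iic t
  have hinner : ∀ x : ℝ, gaussianReal 0 v2 (Set.Iic (t - x))
      = ∫⁻ y in Set.Iic t, gaussianPDF 0 v2 (y - x) := by
    intro x
    rw [gaussianReal_apply 0 h2, lintegral_Iic_shift _ (measurable_gaussianPDF 0 v2)]
  simp_rw [hinner]
  rw [gaussianReal_of_var_ne_zero 0 h1,
    lintegral_withDensity_eq_lintegral_mul _ (measurable_gaussianPDF 0 v1)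
      (Measurable.lintegral_prod_right
        (f := fun x y => gaussianPDF 0 v2 (y - x))
        ((measurable_gaussianPDF 0 v2).comp (measurable_snd.sub measurable_fst)))]
  simp only [Pi.mul_apply]
  have hswap : ∫⁻ x, gaussianPDF 0 v1 x * ∫⁻ y in Set.Iic t, gaussianPDF 0 v2 (y - x)
      = ∫⁻ y in Set.Iic t, ∫⁻ x, gaussianPDF 0 v1 x * gaussianPDF 0 v2 (y - x) := by
    have hmeas : Measurable (Function.uncurry fun x y => gaussianPDF 0 v1 x * gaussianPDF 0 v2 (y - x)) := by
      refine Measurable.mul (f := fun p : ℝ × ℝ => gaussianPDF 0 v1 p.1) (g := fun p : ℝ × ℝ => gaussianPDF 0 v2 (p.2 - p.1)) ?_ ?_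
      · exact (measurable_gaussianPDF 0 v1).comp measurable_fst
      · exact (measurable_gaussianPDF 0 v2).comp (measurable_snd.sub measurable_fst)
    rw [← lintegral_lintegral_swap hmeas.aemeasurable]
    congr 1
    ext x
    exact (lintegral_const_mul _ ((measurable_gaussianPDF 0 v2).comp (measurable_id.sub measurable_const))).symm
  rw [hswap]
  simp_rw [lintegral_prod_pdf h1 h2]
  rw [gaussianReal_apply 0 h12]

lemma map_add_gauss {Ω : Type*} [MeasurableSpace Ω] (P : Measure Ω) [IsProbabilityMeasure P]
    {X Y : Ω → ℝ} (hX : Measurable X) (hY : Measurable Y)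
    (hindep : IndepFun X Y P) {v1 v2 : ℝ≥0}
    (h1 : P.map X = gaussianReal 0 v1) (h2 : P.map Y = gaussianReal 0 v2) :
    P.map (fun ω => X ω + Y ω) = gaussianReal 0 (v1 + v2) := by
  have hpair : P.map (fun ω => (X ω, Y ω)) = (P.map X).prod (P.map Y) :=
    (indepFun_iff_map_prod_eq_prod_map_map hX.aemeasurable hY.aemeasurable).mp hindep
  have : P.map (fun ω => X ω + Y ω)
      = ((P.map (fun ω => (X ω, Y ω))).map (fun p : ℝ × ℝ => p.1 + p.2)) := by
    rw [Measure.map_map measurable_add (hX.prodMk hY)]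
    rfl
  rw [this, hpair, h1, h2, ← Measure.conv, gauss_conv]

lemma map_sum_gauss {Ω : Type*} [MeasurableSpace Ω] (P : Measure Ω) [IsProbabilityMeasure P]
    {ι : Type*} [DecidableEq ι] (Y : ι → Ω → ℝ) (hmeas : ∀ i, Measurable (Y i))
    (hindep : iIndepFun Y P)
    (v : ι → ℝ≥0) (hY : ∀ i, P.map (Y i) = gaussianReal 0 (v i)) (s : Finset ι) :
    P.map (fun ω => ∑ i ∈ s, Y i ω) = gaussianReal 0 (∑ i ∈ s, v i) := by
  induction s using Finset.induction_on with
  | empty =>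
      simp only [Finset.sum_empty]
      rw [Measure.map_const, gaussianReal_zero_var]
      simp
  | @insert i s hi ih =>
      have hind : IndepFun (∑ j ∈ s, Y j) (Y i) P :=
        hindep.indepFun_finsetSum_of_notMem hmeas hi
      have hSm : Measurable (fun ω => ∑ j ∈ s, Y j ω) := by fun_prop
      have hS : P.map (fun ω => ∑ j ∈ s, Y j ω) = gaussianReal 0 (∑ j ∈ s, v j) := ih
      have hind' : IndepFun (fun ω => ∑ j ∈ s, Y j ω) (Y i) P := by
        have : (∑ j ∈ s, Y j) = fun ω => ∑ j ∈ s, Y j ω := by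
          ext ω; simp [Finset.sum_apply]
        rwa [this] at hind
      have := map_add_gauss P hSm (hmeas i) hind' hS (hY i)
      have heq : (fun ω => ∑ j ∈ insert i s, Y j ω)
          = fun ω => (∑ j ∈ s, Y j ω) + Y i ω := by
        ext ω
        rw [Finset.sum_insert hi]
        ring
      rw [heq, this, Finset.sum_insert hi, add_comm (v i)]

lemma gauss_Iic_eq_cdf {v : ℝ≥0} (hv : v ≠ 0) (t : ℝ) :
    gaussianReal 0 v (Set.Iic t)
      = ENNReal.ofReal (cdf (gaussianReal 0 1) (t / Real.sqrt v)) := by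
  have hc : (0:ℝ) < Real.sqrt v := Real.sqrt_pos.mpr (by exact_mod_cast pos_iff_ne_zero.mpr hv)
  have hmap : (gaussianReal 0 1).map (fun x => Real.sqrt v * x) = gaussianReal 0 v := by
    rw [gaussianReal_map_const_mul (Real.sqrt v)]
    congr 1
    · ring
    · ext
      simp [Real.sq_sqrt (v.coe_nonneg)]
  rw [← hmap, Measure.map_apply (measurable_const_mul _) measurableSet_Iic]
  have hpre : (fun x => Real.sqrt v * x) ⁻¹' Set.Iic t = Set.Iic (t / Real.sqrt v) := by
    ext x
    simp only [Set.mem_preimage, Set.mem_Iic]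
    rw [← le_div_iff₀' hc]
  rw [hpre, ofReal_cdf]

lemma gauss_cdf_strictMono : StrictMono (cdf (gaussianReal 0 1)) := by
  intro x y hxy
  have h1 : gaussianReal 0 1 (Set.Iic y)
      = gaussianReal 0 1 (Set.Iic x) + gaussianReal 0 1 (Set.Ioc x y) := by
    rw [← measure_union (by rw [Set.disjoint_iff_inter_eq_empty]; ext z; simp; intro h h'; linarith)
      measurableSet_Ioc, Set.Iic_union_Ioc_eq_Iic hxy.le]
  have h2 : gaussianReal 0 1 (Set.Ioc x y) ≠ 0 := by
    intro h0
    have := (gaussianReal_absolutelyContinuous' 0 (by norm_num : (1:ℝ≥0) ≠ 0)) h0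
    rw [Real.volume_Ioc] at this
    simp only [ENNReal.ofReal_eq_zero, sub_nonpos] at this
    linarith
  have hfin : gaussianReal 0 1 (Set.Ioc x y) ≠ ⊤ := measure_ne_top _ _
  have hfin' : gaussianReal 0 1 (Set.Iic x) ≠ ⊤ := measure_ne_top _ _
  rw [cdf_eq_real, cdf_eq_real, measureReal_def, measureReal_def, h1, ENNReal.toReal_add hfin' hfin]
  have : 0 < (gaussianReal 0 1 (Set.Ioc x y)).toReal :=
    ENNReal.toReal_pos h2 hfin
  linarith

/-- Analytical reformulation of a multivariate Gaussian chance constraint: if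
`Δρ = μ + L·Z` with `Z₁, …, Zₙ` independent standard Gaussians, `Lᵀb ≠ 0`,
`ε ∈ (0,1)` and `Φ(q) = 1 − ε`, then
`P[a + bᵀΔρ ≤ c] ≥ 1 − ε ↔ a + bᵀμ + q·‖Lᵀb‖₂ ≤ c`. -/
theorem gaussian_chance_constraint_multivariate
    (n : ℕ) (hn : 0 < n) {Ω : Type*} [MeasurableSpace Ω]
    (P : Measure Ω) [IsProbabilityMeasure P]
    (Z : Fin n → Ω → ℝ) (hZmeas : ∀ i, Measurable (Z i))
    (hZindep : iIndepFun Z P)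
    (hZ : ∀ i, P.map (Z i) = gaussianReal 0 1)
    (μ : Fin n → ℝ) (L : Matrix (Fin n) (Fin n) ℝ)
    (b : Fin n → ℝ) (hb : L.vecMul b ≠ 0)
    (a c : ℝ) (ε : ℝ) (hε : ε ∈ Set.Ioo (0 : ℝ) 1) (q : ℝ)
    (hq : cdf (gaussianReal 0 1) q = 1 - ε) :
    ENNReal.ofReal (1 - ε)
        ≤ P {ω : Ω |
            a + ∑ i, b i * (μ i + L.mulVec (fun j => Z j ω) i) ≤ c}
      ↔ a + ∑ i, b i * μ i
          + q * Real.sqrt (∑ j, (∑ i, b i * L i j) ^ 2) ≤ c := by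
  classical
  set w : Fin n → ℝ := fun j => ∑ i, b i * L i j with hw
  have hwb : L.vecMul b = w := by
    ext j
    simp [Matrix.vecMul, dotProduct, hw]
  obtain ⟨j0, hj0⟩ : ∃ j, w j ≠ 0 := by
    by_contra h
    push_neg at h
    exact hb (by rw [hwb]; ext j; exact h j)
  set Y : Fin n → Ω → ℝ := fun j ω => w j * Z j ω with hY
  have hYmeas : ∀ j, Measurable (Y j) := fun j => (hZmeas j).const_mul _
  have hYindep : iIndepFun Y P := by
    exact hZindep.comp (fun j x => w j * x) (fun j => measurable_const_mul _)
  set v : Fin n → ℝ≥0 := fun j => ⟨w j ^ 2, sq_nonneg _⟩ with hv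
  have hYmap : ∀ j, P.map (Y j) = gaussianReal 0 (v j) := by
    intro j
    have : P.map (Y j) = (P.map (Z j)).map (fun x => w j * x) := by
      rw [Measure.map_map (measurable_const_mul _) (hZmeas j)]
      rfl
    rw [this, hZ j, gaussianReal_map_const_mul]
    norm_num
    rfl
  have hSmap : P.map (fun ω => ∑ j, Y j ω) = gaussianReal 0 (∑ j, v j) :=
    map_sum_gauss P Y hYmeas hYindep v hYmap Finset.univ
  set V : ℝ≥0 := ∑ j, v j with hV
  have hVcoe : (V : ℝ) = ∑ j, w j ^ 2 := by
    push_cast [hV]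
    rfl
  have hVpos : (0:ℝ) < (V : ℝ) := by
    rw [hVcoe]
    exact Finset.sum_pos' (fun j _ => sq_nonneg _)
      ⟨j0, Finset.mem_univ _, by positivity⟩
  have hVne : V ≠ 0 := by
    intro h
    rw [h] at hVpos
    simp at hVpos
  have hσpos : (0:ℝ) < Real.sqrt V := Real.sqrt_pos.mpr hVpos
  set t : ℝ := c - a - ∑ i, b i * μ i with ht
  have hsetEq : {ω : Ω | a + ∑ i, b i * (μ i + L.mulVec (fun j => Z j ω) i) ≤ c}
      = (fun ω => ∑ j, Y j ω) ⁻¹' Set.Iic t := by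
    ext ω
    simp only [Set.mem_setOf_eq, Set.mem_preimage, Set.mem_Iic]
    have hexp : ∑ i, b i * (μ i + L.mulVec (fun j => Z j ω) i)
        = (∑ i, b i * μ i) + ∑ j, Y j ω := by
      simp only [Matrix.mulVec, dotProduct, mul_add, Finset.sum_add_distrib, hY, hw,
        Finset.mul_sum]
      congr 1
      rw [Finset.sum_comm]
      refine Finset.sum_congr rfl (fun j _ => ?_)
      rw [Finset.sum_mul]
      exact Finset.sum_congr rfl (fun i _ => by ring)
    rw [hexp, ht]
    constructor <;> intro h <;> linarith
  have hSmeas : Measurable (fun ω => ∑ j, Y j ω) := by fun_prop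
  have hPval : P {ω : Ω | a + ∑ i, b i * (μ i + L.mulVec (fun j => Z j ω) i) ≤ c}
      = ENNReal.ofReal (cdf (gaussianReal 0 1) (t / Real.sqrt V)) := by
    rw [hsetEq, ← Measure.map_apply hSmeas measurableSet_Iic, hSmap,
      gauss_Iic_eq_cdf hVne]
  rw [hPval, ENNReal.ofReal_le_ofReal_iff (cdf_nonneg _ _), ← hq,
    gauss_cdf_strictMono.le_iff_le, le_div_iff₀ hσpos]
  have hsq : Real.sqrt (∑ j, (∑ i, b i * L i j) ^ 2) = Real.sqrt V := by
    rw [hVcoe]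
  rw [hsq]
  constructor <;> intro h <;> [skip; skip] <;> rw [ht] at * <;> linarith
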